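/- arXiv:2410.20020 — 4 statements merged into one kernel-verified Lean document; each statement's English description precedes it below -/
import Mathlib

section
/- (Talagrand-type isoperimetric inequality over F_q) For any monotone decreasing function f : F_q^n → {0,1} and any p ∈ [0,1], E_{z∼p}[√(h_f(z))] ≥ ((1−p)/2)·E_{z∼p}[f(z)]·(1 − E_{z∼p}[f(z)]). -/
open Finset

/-- Expectation of `f` under the q-ary `p`-noisy distribution on `F_q^n`. -/
noncomputable def noisyExp (q n : ℕ) [NeZero q] (p : ℝ) (f : (Fin n → ZMod q) → ℝ) : ℝ :=
  ∑ z : Fin n → ZMod q, (∏ i, if z i = 0 then 1 - p else p / (q - 1)) * f z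

/-- `f` is monotone decreasing. -/
def MonoDec (q n : ℕ) [NeZero q] (f : (Fin n → ZMod q) → ℝ) : Prop :=
  ∀ (z : Fin n → ZMod q) (i : Fin n) (a : ZMod q), a ≠ 0 →
    f (Function.update z i a) ≤ f (Function.update z i 0)

/-- `h_f(z)`: if `f z = 1`, the number of coordinates `i` with `z i = 0` such that
setting the `i`-th coordinate to some nonzero `a` makes `f` vanish; `0` otherwise. -/
noncomputable def hfun (q n : ℕ) [NeZero q] (f : (Fin n → ZMod q) → ℝ)
    (z : Fin n → ZMod q) : ℝ :=
  if f z = 1 then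
    (Nat.card {i : Fin n // z i = 0 ∧ ∃ a : ZMod q, a ≠ 0 ∧ f (Function.update z i a) = 0} : ℝ)
  else 0

section Aux
set_option linter.unusedSectionVars false

variable (q : ℕ) [NeZero q]

noncomputable def W (n : ℕ) (p : ℝ) (z : Fin n → ZMod q) : ℝ :=
  ∏ i, if z i = 0 then 1 - p else p / (q - 1)

lemma noisyExp_eq (n : ℕ) (p : ℝ) (f : (Fin n → ZMod q) → ℝ) :
    noisyExp q n p f = ∑ z : Fin n → ZMod q, W q n p z * f z := rfl

variable {p : ℝ}

lemma hK1 (hq : 2 ≤ q) : (1:ℝ) ≤ (q:ℝ) - 1 := by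
  have : (2:ℝ) ≤ (q:ℝ) := by exact_mod_cast hq
  linarith

lemma W_nonneg (hq : 2 ≤ q) (hp0 : 0 ≤ p) (hp1 : p ≤ 1) (n : ℕ) (z : Fin n → ZMod q) : 0 ≤ W q n p z := by
  apply Finset.prod_nonneg
  intro i _
  by_cases h : z i = 0
  · simp [h]; linarith
  · simp [h]
    have := hK1 q hq
    positivity

lemma W_cons (n : ℕ) (x : ZMod q) (z : Fin n → ZMod q) :
    W q (n+1) p (Fin.cons x z) =
      (if x = 0 then 1 - p else p / (q - 1)) * W q n p z := by
  rw [W, Fin.prod_univ_succ]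
  simp [W]

lemma sum_cons (n : ℕ) (F : (Fin (n+1) → ZMod q) → ℝ) :
    ∑ z' : Fin (n+1) → ZMod q, F z'
      = ∑ x : ZMod q, ∑ z : Fin n → ZMod q, F (Fin.cons x z) := by
  rw [← (Equiv.sum_comp (Fin.consEquiv (fun _ => ZMod q)) F)]
  rw [Fintype.sum_prod_type]
  rfl

lemma noisyExp_cons (n : ℕ) (g : (Fin (n+1) → ZMod q) → ℝ) :
    noisyExp q (n+1) p g
      = ∑ x : ZMod q, (if x = 0 then 1 - p else p / (q - 1)) *
          noisyExp q n p (fun z => g (Fin.cons x z)) := by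
  rw [noisyExp_eq, sum_cons]
  refine Finset.sum_congr rfl fun x _ => ?_
  rw [noisyExp_eq, Finset.mul_sum]
  refine Finset.sum_congr rfl fun z _ => ?_
  rw [W_cons]; ring


lemma card_S (hq : 2 ≤ q) :
    ((Finset.univ.erase (0 : ZMod q)).card : ℝ) = (q:ℝ) - 1 := by
  rw [Finset.card_erase_of_mem (Finset.mem_univ _), Finset.card_univ, ZMod.card]
  have h1 : 1 ≤ q := by omega
  push_cast [Nat.cast_sub h1]
  ring

lemma sum_w1 (hq : 2 ≤ q) :
    ∑ x : ZMod q, (if x = 0 then 1 - p else p / (q - 1)) = 1 := by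
  rw [← Finset.add_sum_erase _ _ (Finset.mem_univ (0 : ZMod q))]
  rw [if_pos rfl]
  rw [Finset.sum_congr rfl (fun x hx => if_neg (Finset.ne_of_mem_erase hx))]
  rw [Finset.sum_const, nsmul_eq_mul, card_S q hq]
  have hK := hK1 q hq
  field_simp
  ring

lemma sum_w_eq_one (hq : 2 ≤ q) : ∀ n : ℕ, ∑ z : Fin n → ZMod q, W q n p z = 1 := by
  intro n
  induction n with
  | zero =>
      rw [Finset.sum_eq_single_of_mem (fun i => i.elim0) (Finset.mem_univ _)]
      · simp [W]
      · intro b _ hb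
        exact absurd (funext fun i => i.elim0) hb
  | succ n ih =>
      rw [sum_cons q n (W q (n+1) p)]
      have : ∀ x : ZMod q, ∑ z : Fin n → ZMod q, W q (n+1) p (Fin.cons x z)
          = (if x = 0 then 1 - p else p / (q - 1)) := by
        intro x
        rw [Finset.sum_congr rfl (fun z _ => W_cons q n x z), ← Finset.mul_sum, ih, mul_one]
      rw [Finset.sum_congr rfl (fun x _ => this x), sum_w1 q hq]

lemma exp_mono (hq : 2 ≤ q) (hp0 : 0 ≤ p) (hp1 : p ≤ 1) (n : ℕ)
    (g₁ g₂ : (Fin n → ZMod q) → ℝ) (h : ∀ z, g₁ z ≤ g₂ z) :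
    noisyExp q n p g₁ ≤ noisyExp q n p g₂ := by
  rw [noisyExp_eq, noisyExp_eq]
  exact Finset.sum_le_sum fun z _ =>
    mul_le_mul_of_nonneg_left (h z) (W_nonneg q hq hp0 hp1 n z)

lemma exp_nonneg (hq : 2 ≤ q) (hp0 : 0 ≤ p) (hp1 : p ≤ 1) (n : ℕ)
    (g : (Fin n → ZMod q) → ℝ) (h : ∀ z, 0 ≤ g z) :
    0 ≤ noisyExp q n p g := by
  rw [noisyExp_eq]
  exact Finset.sum_nonneg fun z _ => mul_nonneg (W_nonneg q hq hp0 hp1 n z) (h z)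

lemma exp_le_one (hq : 2 ≤ q) (hp0 : 0 ≤ p) (hp1 : p ≤ 1) (n : ℕ)
    (g : (Fin n → ZMod q) → ℝ) (h : ∀ z, g z ≤ 1) :
    noisyExp q n p g ≤ 1 := by
  have h2 : noisyExp q n p g ≤ noisyExp q n p (fun _ => 1) :=
    exp_mono q hq hp0 hp1 n _ _ h
  calc noisyExp q n p g ≤ noisyExp q n p (fun _ => 1) := h2
    _ = 1 := by rw [noisyExp_eq]; simp only [mul_one]; exact sum_w_eq_one q hq n

lemma exp_sub_le (hq : 2 ≤ q) (hp0 : 0 ≤ p) (hp1 : p ≤ 1) (n : ℕ)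
    (g₁ g₂ b : (Fin n → ZMod q) → ℝ) (h : ∀ z, g₁ z - g₂ z ≤ b z) :
    noisyExp q n p g₁ - noisyExp q n p g₂ ≤ noisyExp q n p b := by
  simp only [noisyExp_eq, ← Finset.sum_sub_distrib]
  refine Finset.sum_le_sum fun z _ => ?_
  have := mul_le_mul_of_nonneg_left (h z) (W_nonneg q hq hp0 hp1 n z)
  nlinarith [this]


noncomputable def bfun (n : ℕ) (f : (Fin (n+1) → ZMod q) → ℝ) (z : Fin n → ZMod q) : ℝ :=
  if f (Fin.cons 0 z) = 1 ∧ ∃ a : ZMod q, a ≠ 0 ∧ f (Fin.cons a z) = 0 then 1 else 0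

open Classical in
lemma card_subtype_real {m : ℕ} (P : Fin m → Prop) :
    (Nat.card {i : Fin m // P i} : ℝ) = ∑ i : Fin m, if P i then (1:ℝ) else 0 := by
  rw [Nat.card_eq_fintype_card, Fintype.card_subtype, Finset.card_filter]
  push_cast
  rfl

lemma hfun_nonneg (n : ℕ) (f : (Fin n → ZMod q) → ℝ) (z : Fin n → ZMod q) :
    0 ≤ hfun q n f z := by
  rw [hfun]
  split
  · positivity
  · exact le_refl 0

lemma hfun_cons_ne (n : ℕ) (f : (Fin (n+1) → ZMod q) → ℝ) (x : ZMod q) (hx : x ≠ 0)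
    (z : Fin n → ZMod q) :
    hfun q (n+1) f (Fin.cons x z) = hfun q n (fun y => f (Fin.cons x y)) z := by
  classical
  rw [hfun, hfun]
  by_cases hfz : f (Fin.cons x z) = 1
  · rw [if_pos hfz, if_pos hfz, card_subtype_real, card_subtype_real, Fin.sum_univ_succ]
    rw [if_neg (by simp [hx])]
    rw [zero_add]
    refine Finset.sum_congr rfl fun j _ => ?_
    congr 1
    simp only [Fin.cons_succ, ← Fin.cons_update]
  · rw [if_neg hfz, if_neg hfz]

lemma hfun_cons_zero (n : ℕ) (f : (Fin (n+1) → ZMod q) → ℝ) (z : Fin n → ZMod q) :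
    hfun q (n+1) f (Fin.cons 0 z)
      = hfun q n (fun y => f (Fin.cons 0 y)) z + bfun q n f z := by
  classical
  rw [hfun, hfun, bfun]
  by_cases hfz : f (Fin.cons 0 z) = 1
  · rw [if_pos hfz, if_pos hfz, card_subtype_real, card_subtype_real, Fin.sum_univ_succ]
    rw [add_comm]
    congr 1
    · refine Finset.sum_congr rfl fun j _ => ?_
      congr 1
      simp only [Fin.cons_succ, ← Fin.cons_update]
    · congr 1
      simp only [Fin.cons_zero, Fin.update_cons_zero, eq_iff_iff]
      exact ⟨fun h => ⟨hfz, h.2⟩, fun h => ⟨trivial, h.2⟩⟩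
  · rw [if_neg hfz, if_neg hfz, if_neg (fun h => hfz h.1)]
    simp


lemma bfun_nonneg (n : ℕ) (f : (Fin (n+1) → ZMod q) → ℝ) (z : Fin n → ZMod q) :
    0 ≤ bfun q n f z := by
  rw [bfun]; split
  · norm_num
  · exact le_refl 0

lemma bfun_le_one (n : ℕ) (f : (Fin (n+1) → ZMod q) → ℝ) (z : Fin n → ZMod q) :
    bfun q n f z ≤ 1 := by
  rw [bfun]; split
  · exact le_refl 1
  · norm_num

lemma sqrt_bfun (n : ℕ) (f : (Fin (n+1) → ZMod q) → ℝ) (z : Fin n → ZMod q) :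
    Real.sqrt (bfun q n f z) = bfun q n f z := by
  rw [bfun]; split
  · exact Real.sqrt_one
  · exact Real.sqrt_zero

lemma sub_le_bfun (n : ℕ) (f : (Fin (n+1) → ZMod q) → ℝ)
    (hf01 : ∀ z, f z = 0 ∨ f z = 1) (a : ZMod q) (ha : a ≠ 0) (z : Fin n → ZMod q) :
    f (Fin.cons 0 z) - f (Fin.cons a z) ≤ bfun q n f z := by
  have hb0 := bfun_nonneg q n f z
  rcases hf01 (Fin.cons 0 z) with h0 | h0
  · rcases hf01 (Fin.cons a z) with h1 | h1 <;> rw [h0, h1] <;> linarith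
  · rcases hf01 (Fin.cons a z) with h1 | h1
    · have : bfun q n f z = 1 := by
        rw [bfun, if_pos ⟨h0, a, ha, h1⟩]
      rw [h0, h1, this]; norm_num
    · rw [h0, h1]; linarith

lemma exp_lin (n : ℕ) (c1 c2 : ℝ) (g1 g2 : (Fin n → ZMod q) → ℝ) :
    noisyExp q n p (fun z => c1 * g1 z + c2 * g2 z)
      = c1 * noisyExp q n p g1 + c2 * noisyExp q n p g2 := by
  simp only [noisyExp_eq, Finset.mul_sum, ← Finset.sum_add_distrib]
  exact Finset.sum_congr rfl fun z _ => by ring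

lemma ptCS (u v x y : ℝ) (hu : 0 ≤ u) (hv : 0 ≤ v) (huv : u^2 + v^2 ≤ 1)
    (hx : 0 ≤ x) (hy : 0 ≤ y) :
    u * Real.sqrt x + v * Real.sqrt y ≤ Real.sqrt (x + y) := by
  have hsx := Real.sqrt_nonneg x
  have hsy := Real.sqrt_nonneg y
  have hx2 := Real.sq_sqrt hx
  have hy2 := Real.sq_sqrt hy
  refine (Real.le_sqrt (by positivity) (by linarith)).mpr ?_
  nlinarith [sq_nonneg (u * Real.sqrt y - v * Real.sqrt x),
    mul_nonneg (sub_nonneg.mpr huv) (by linarith : (0:ℝ) ≤ x + y)]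

lemma jensen_step (hq : 2 ≤ q) (hp0 : 0 ≤ p) (hp1 : p ≤ 1) (n : ℕ)
    (X Y : (Fin n → ZMod q) → ℝ) (hX : ∀ z, 0 ≤ X z)
    (hYs : ∀ z, Real.sqrt (Y z) = Y z) (hY0 : ∀ z, 0 ≤ Y z) :
    Real.sqrt ((noisyExp q n p (fun z => Real.sqrt (X z)))^2 + (noisyExp q n p Y)^2)
      ≤ noisyExp q n p (fun z => Real.sqrt (X z + Y z)) := by
  set A := noisyExp q n p (fun z => Real.sqrt (X z)) with hA
  set B := noisyExp q n p Y with hB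
  have hA0 : 0 ≤ A := exp_nonneg q hq hp0 hp1 n _ (fun z => Real.sqrt_nonneg _)
  have hB0 : 0 ≤ B := exp_nonneg q hq hp0 hp1 n _ hY0
  by_cases h0 : A^2 + B^2 = 0
  · rw [h0, Real.sqrt_zero]
    exact exp_nonneg q hq hp0 hp1 n _ (fun z => Real.sqrt_nonneg _)
  · have hpos : 0 < A^2 + B^2 := lt_of_le_of_ne (by positivity) (Ne.symm h0)
    set s := Real.sqrt (A^2 + B^2) with hs
    have hspos : 0 < s := Real.sqrt_pos.mpr hpos
    have hs2 : s^2 = A^2 + B^2 := Real.sq_sqrt (le_of_lt hpos)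
    have huv : (A/s)^2 + (B/s)^2 ≤ 1 := by
      rw [div_pow, div_pow, ← add_div, ← hs2]
      rw [div_self (by positivity)]
    have hpt : ∀ z, (A/s) * Real.sqrt (X z) + (B/s) * (Y z) ≤ Real.sqrt (X z + Y z) := by
      intro z
      have h := ptCS (A/s) (B/s) (X z) (Y z) (by positivity) (by positivity) huv (hX z) (hY0 z)
      rwa [hYs z] at h
    have hlin : noisyExp q n p (fun z => (A/s) * Real.sqrt (X z) + (B/s) * (Y z))
        = (A/s) * A + (B/s) * B := by
      rw [exp_lin]
    have hval : (A/s) * A + (B/s) * B = s := by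
      field_simp
      nlinarith [hs2]
    calc s = noisyExp q n p (fun z => (A/s) * Real.sqrt (X z) + (B/s) * (Y z)) := by
            rw [hlin, hval]
      _ ≤ noisyExp q n p (fun z => Real.sqrt (X z + Y z)) :=
            exp_mono q hq hp0 hp1 n _ _ hpt

lemma sqrt_key (α B p : ℝ) (hα : 0 ≤ α) (hα8 : α ≤ 1/8) (hB0 : 0 ≤ B) (hB1 : B ≤ 1)
    (hp0 : 0 ≤ p) (hp1 : p ≤ 1) :
    α + p * B^2 / 2 ≤ Real.sqrt (α^2 + B^2) := by
  refine (Real.le_sqrt (by positivity) (by positivity)).mpr ?_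
  have h1 : p * α ≤ 1/8 := by nlinarith
  have h2 : B^2 ≤ 1 := by nlinarith
  have e1 : p*α*B^2 ≤ (1/8)*B^2 := by nlinarith [mul_le_mul_of_nonneg_right h1 (sq_nonneg B)]
  have hpB : p^2*B^2 ≤ 1 := by nlinarith
  have h3 : p^2*B^2*B^2 ≤ B^2 := by nlinarith [mul_nonneg (sub_nonneg.mpr hpB) (sq_nonneg B)]
  nlinarith [e1, h3]

lemma mono_cons (n : ℕ) (f : (Fin (n+1) → ZMod q) → ℝ) (hmono : MonoDec q (n+1) f)
    (x : ZMod q) : MonoDec q n (fun z => f (Fin.cons x z)) := by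
  intro z i a ha
  have := hmono (Fin.cons x z) i.succ a ha
  simp only [← Fin.cons_update] at this
  exact this

lemma cons_le_zero (n : ℕ) (f : (Fin (n+1) → ZMod q) → ℝ) (hmono : MonoDec q (n+1) f)
    (a : ZMod q) (ha : a ≠ 0) (z : Fin n → ZMod q) :
    f (Fin.cons a z) ≤ f (Fin.cons 0 z) := by
  have := hmono (Fin.cons 0 z) 0 a ha
  rwa [Fin.update_cons_zero, Fin.update_cons_zero] at this

lemma final_alg (p K μ0 s1 s2 u2 B : ℝ) (hK : 1 ≤ K) (hp0 : 0 ≤ p) (hp1 : p ≤ 1)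
    (hu2id : u2 = K*μ0^2 - 2*μ0*s1 + s2) (hu2le : u2 ≤ K*B^2) :
    (1-p)/2 * ((((1-p)*μ0 + (p/K)*s1)) * (1 - ((1-p)*μ0 + (p/K)*s1)))
      ≤ (1-p)*((1-p)/2*(μ0*(1-μ0)) + p*B^2/2) + (p/K)*((1-p)/2*(s1-s2)) := by
  have hKpos : (0:ℝ) < K := by linarith
  have hKne : K ≠ 0 := ne_of_gt hKpos
  have hid : (((1-p)*μ0 + (p/K)*s1)) * (1 - ((1-p)*μ0 + (p/K)*s1))
      - (μ0*(1-μ0))*(1-p) - (p/K)*(s1-s2)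
      = (p/K)*u2 - p^2*(μ0 - s1/K)^2 := by
    rw [hu2id]
    field_simp
    ring
  have h1 : (p/K)*u2 ≤ p*B^2 := by
    have := mul_le_mul_of_nonneg_left hu2le (by positivity : (0:ℝ) ≤ p/K)
    calc (p/K)*u2 ≤ (p/K)*(K*B^2) := this
      _ = p*B^2 := by
        rw [show (p/K)*(K*B^2) = ((p/K)*K)*B^2 by ring, div_mul_cancel₀ _ hKne]
  have hkey : (((1-p)*μ0 + (p/K)*s1)) * (1 - ((1-p)*μ0 + (p/K)*s1))
      - (μ0*(1-μ0))*(1-p) - p*B^2 - (p/K)*(s1-s2) ≤ 0 := by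
    nlinarith [sq_nonneg (μ0 - s1/K), hid, h1, sq_nonneg p]
  have h2 : (0:ℝ) ≤ (1-p)/2 := by linarith
  nlinarith [mul_nonneg h2 (neg_nonneg.mpr hkey)]


lemma key (hq : 2 ≤ q) (hp0 : 0 ≤ p) (hp1 : p ≤ 1) :
    ∀ (n : ℕ) (f : (Fin n → ZMod q) → ℝ), (∀ z, f z = 0 ∨ f z = 1) → MonoDec q n f →
    (1 - p) / 2 * (noisyExp q n p f * (1 - noisyExp q n p f)) ≤
      noisyExp q n p (fun z => Real.sqrt (hfun q n f z)) := by
  intro n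
  induction n with
  | zero =>
      intro f hf01 _
      have hz : ∀ z : Fin 0 → ZMod q, z = (fun i => i.elim0) :=
        fun z => funext fun i => i.elim0
      have hμ : noisyExp q 0 p f = f (fun i => i.elim0) := by
        rw [noisyExp_eq,
          Finset.sum_eq_single_of_mem (fun i : Fin 0 => i.elim0) (Finset.mem_univ _)]
        · have hW : W q 0 p (fun i => i.elim0) = 1 := by
            rw [W]
            exact Finset.prod_of_isEmpty _
          rw [hW, one_mul]
        · intro b _ hb; exact absurd (hz b) hb
      have hRHS : 0 ≤ noisyExp q 0 p (fun z => Real.sqrt (hfun q 0 f z)) :=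
        exp_nonneg q hq hp0 hp1 0 _ (fun z => Real.sqrt_nonneg _)
      rcases hf01 (fun i => i.elim0) with h | h <;> rw [hμ, h] <;>
        simpa using hRHS
  | succ n ih =>
      intro f hf01 hmono
      classical
      have hK : (1:ℝ) ≤ (q:ℝ) - 1 := hK1 q hq
      have hIH : ∀ x : ZMod q,
          (1-p)/2 * (noisyExp q n p (fun z => f (Fin.cons x z)) *
            (1 - noisyExp q n p (fun z => f (Fin.cons x z)))) ≤
          noisyExp q n p (fun z => Real.sqrt (hfun q n (fun y => f (Fin.cons x y)) z)) :=
        fun x => ih (fun z => f (Fin.cons x z)) (fun z => hf01 _) (mono_cons q n f hmono x)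
      have hM0 : ∀ x : ZMod q, 0 ≤ noisyExp q n p (fun z => f (Fin.cons x z)) :=
        fun x => exp_nonneg q hq hp0 hp1 n _
          (fun z => by rcases hf01 (Fin.cons x z) with h|h <;> rw [h] <;> norm_num)
      have hM1 : ∀ x : ZMod q, noisyExp q n p (fun z => f (Fin.cons x z)) ≤ 1 :=
        fun x => exp_le_one q hq hp0 hp1 n _
          (fun z => by rcases hf01 (Fin.cons x z) with h|h <;> rw [h] <;> norm_num)
      have hB0 : 0 ≤ noisyExp q n p (bfun q n f) :=
        exp_nonneg q hq hp0 hp1 n _ (bfun_nonneg q n f)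
      have hB1 : noisyExp q n p (bfun q n f) ≤ 1 :=
        exp_le_one q hq hp0 hp1 n _ (bfun_le_one q n f)
      have hMle : ∀ a : ZMod q, a ≠ 0 →
          noisyExp q n p (fun z => f (Fin.cons a z)) ≤
            noisyExp q n p (fun z => f (Fin.cons 0 z)) :=
        fun a ha => exp_mono q hq hp0 hp1 n _ _ (fun z => cons_le_zero q n f hmono a ha z)
      have hMB : ∀ a : ZMod q, a ≠ 0 →
          noisyExp q n p (fun z => f (Fin.cons 0 z)) -
            noisyExp q n p (fun z => f (Fin.cons a z)) ≤ noisyExp q n p (bfun q n f) :=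
        fun a ha => exp_sub_le q hq hp0 hp1 n _ _ _ (fun z => sub_le_bfun q n f hf01 a ha z)
      have hμdec : noisyExp q (n+1) p f
          = (1-p) * noisyExp q n p (fun z => f (Fin.cons 0 z))
            + (p/((q:ℝ)-1)) * ∑ a ∈ Finset.univ.erase (0:ZMod q),
                noisyExp q n p (fun z => f (Fin.cons a z)) := by
        rw [noisyExp_cons q n f,
          ← Finset.add_sum_erase _ _ (Finset.mem_univ (0:ZMod q)), if_pos rfl]
        congr 1
        rw [Finset.mul_sum]
        refine Finset.sum_congr rfl fun a ha => ?_
        rw [if_neg (Finset.ne_of_mem_erase ha)]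
      have hRdec : noisyExp q (n+1) p (fun z => Real.sqrt (hfun q (n+1) f z))
          = (1-p) * noisyExp q n p
              (fun z => Real.sqrt (hfun q n (fun y => f (Fin.cons 0 y)) z + bfun q n f z))
            + (p/((q:ℝ)-1)) * ∑ a ∈ Finset.univ.erase (0:ZMod q),
                noisyExp q n p
                  (fun z => Real.sqrt (hfun q n (fun y => f (Fin.cons a y)) z)) := by
        rw [noisyExp_cons q n (fun z => Real.sqrt (hfun q (n+1) f z)),
          ← Finset.add_sum_erase _ _ (Finset.mem_univ (0:ZMod q)), if_pos rfl]
        congr 1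
        · congr 1
          refine congrArg _ (funext fun z => ?_)
          rw [hfun_cons_zero q n f z]
        · rw [Finset.mul_sum]
          refine Finset.sum_congr rfl fun a ha => ?_
          rw [if_neg (Finset.ne_of_mem_erase ha)]
          congr 1
          refine congrArg _ (funext fun z => ?_)
          rw [hfun_cons_ne q n f a (Finset.ne_of_mem_erase ha) z]
      have hjen := jensen_step q hq hp0 hp1 n
        (hfun q n (fun y => f (Fin.cons 0 y))) (bfun q n f)
        (hfun_nonneg q n _) (sqrt_bfun q n f) (bfun_nonneg q n f)
      have hA0 : 0 ≤ noisyExp q n p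
          (fun z => Real.sqrt (hfun q n (fun y => f (Fin.cons 0 y)) z)) :=
        exp_nonneg q hq hp0 hp1 n _ (fun z => Real.sqrt_nonneg _)
      have hα0 : 0 ≤ (1-p)/2 * (noisyExp q n p (fun z => f (Fin.cons 0 z)) *
          (1 - noisyExp q n p (fun z => f (Fin.cons 0 z)))) := by
        have h1 := hM0 0
        have h2 := hM1 0
        have : 0 ≤ noisyExp q n p (fun z => f (Fin.cons 0 z)) *
            (1 - noisyExp q n p (fun z => f (Fin.cons 0 z))) := mul_nonneg h1 (by linarith)
        nlinarith
      have hα8 : (1-p)/2 * (noisyExp q n p (fun z => f (Fin.cons 0 z)) *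
          (1 - noisyExp q n p (fun z => f (Fin.cons 0 z)))) ≤ 1/8 := by
        have h1 := hM0 0
        have h2 := hM1 0
        nlinarith [sq_nonneg (noisyExp q n p (fun z => f (Fin.cons 0 z)) - 1/2)]
      have hsk := sqrt_key ((1-p)/2 * (noisyExp q n p (fun z => f (Fin.cons 0 z)) *
          (1 - noisyExp q n p (fun z => f (Fin.cons 0 z)))))
          (noisyExp q n p (bfun q n f)) p hα0 hα8 hB0 hB1 hp0 hp1
      have hmono2 : Real.sqrt (((1-p)/2 * (noisyExp q n p (fun z => f (Fin.cons 0 z)) *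
            (1 - noisyExp q n p (fun z => f (Fin.cons 0 z)))))^2
            + (noisyExp q n p (bfun q n f))^2)
          ≤ Real.sqrt ((noisyExp q n p
              (fun z => Real.sqrt (hfun q n (fun y => f (Fin.cons 0 y)) z)))^2
            + (noisyExp q n p (bfun q n f))^2) := by
        apply Real.sqrt_le_sqrt
        have := hIH 0
        nlinarith [hα0, this]
      have hE0chain : (1-p)/2 * (noisyExp q n p (fun z => f (Fin.cons 0 z)) *
            (1 - noisyExp q n p (fun z => f (Fin.cons 0 z))))
            + p * (noisyExp q n p (bfun q n f))^2 / 2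
          ≤ noisyExp q n p
              (fun z => Real.sqrt (hfun q n (fun y => f (Fin.cons 0 y)) z + bfun q n f z)) :=
        le_trans hsk (le_trans hmono2 hjen)
      have hsumE : ∑ a ∈ Finset.univ.erase (0:ZMod q),
            ((1-p)/2 * (noisyExp q n p (fun z => f (Fin.cons a z)) *
              (1 - noisyExp q n p (fun z => f (Fin.cons a z)))))
          ≤ ∑ a ∈ Finset.univ.erase (0:ZMod q),
              noisyExp q n p (fun z => Real.sqrt (hfun q n (fun y => f (Fin.cons a y)) z)) :=
        Finset.sum_le_sum (fun a _ => hIH a)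
      have hsum_id : ∑ a ∈ Finset.univ.erase (0:ZMod q),
            ((1-p)/2 * (noisyExp q n p (fun z => f (Fin.cons a z)) *
              (1 - noisyExp q n p (fun z => f (Fin.cons a z)))))
          = (1-p)/2 * ((∑ a ∈ Finset.univ.erase (0:ZMod q),
                noisyExp q n p (fun z => f (Fin.cons a z)))
              - ∑ a ∈ Finset.univ.erase (0:ZMod q),
                  (noisyExp q n p (fun z => f (Fin.cons a z)))^2) := by
        rw [← Finset.sum_sub_distrib, Finset.mul_sum]
        exact Finset.sum_congr rfl fun a _ => by ring
      have hu2le : ∑ a ∈ Finset.univ.erase (0:ZMod q),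
            (noisyExp q n p (fun z => f (Fin.cons 0 z))
              - noisyExp q n p (fun z => f (Fin.cons a z)))^2
          ≤ ((q:ℝ)-1) * (noisyExp q n p (bfun q n f))^2 := by
        calc ∑ a ∈ Finset.univ.erase (0:ZMod q),
              (noisyExp q n p (fun z => f (Fin.cons 0 z))
                - noisyExp q n p (fun z => f (Fin.cons a z)))^2
            ≤ ∑ _a ∈ Finset.univ.erase (0:ZMod q), (noisyExp q n p (bfun q n f))^2 := by
              refine Finset.sum_le_sum (fun a ha => ?_)
              have h1 := hMle a (Finset.ne_of_mem_erase ha)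
              have h2 := hMB a (Finset.ne_of_mem_erase ha)
              nlinarith
          _ = ((q:ℝ)-1) * (noisyExp q n p (bfun q n f))^2 := by
              rw [Finset.sum_const, nsmul_eq_mul, card_S q hq]
      have hu2id : ∑ a ∈ Finset.univ.erase (0:ZMod q),
            (noisyExp q n p (fun z => f (Fin.cons 0 z))
              - noisyExp q n p (fun z => f (Fin.cons a z)))^2
          = ((q:ℝ)-1) * (noisyExp q n p (fun z => f (Fin.cons 0 z)))^2
            - 2 * noisyExp q n p (fun z => f (Fin.cons 0 z)) *
                (∑ a ∈ Finset.univ.erase (0:ZMod q),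
                  noisyExp q n p (fun z => f (Fin.cons a z)))
            + ∑ a ∈ Finset.univ.erase (0:ZMod q),
                (noisyExp q n p (fun z => f (Fin.cons a z)))^2 := by
        have h1 : ∑ a ∈ Finset.univ.erase (0:ZMod q),
              (noisyExp q n p (fun z => f (Fin.cons 0 z))
                - noisyExp q n p (fun z => f (Fin.cons a z)))^2
            = ∑ a ∈ Finset.univ.erase (0:ZMod q),
                ((noisyExp q n p (fun z => f (Fin.cons 0 z)))^2
                  - 2 * noisyExp q n p (fun z => f (Fin.cons 0 z)) *
                      noisyExp q n p (fun z => f (Fin.cons a z))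
                  + (noisyExp q n p (fun z => f (Fin.cons a z)))^2) :=
          Finset.sum_congr rfl fun a _ => by ring
        rw [h1, Finset.sum_add_distrib, Finset.sum_sub_distrib, Finset.sum_const,
          nsmul_eq_mul, card_S q hq, ← Finset.mul_sum]
      have hfin := final_alg p ((q:ℝ)-1)
        (noisyExp q n p (fun z => f (Fin.cons 0 z)))
        (∑ a ∈ Finset.univ.erase (0:ZMod q), noisyExp q n p (fun z => f (Fin.cons a z)))
        (∑ a ∈ Finset.univ.erase (0:ZMod q), (noisyExp q n p (fun z => f (Fin.cons a z)))^2)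
        (∑ a ∈ Finset.univ.erase (0:ZMod q),
          (noisyExp q n p (fun z => f (Fin.cons 0 z))
            - noisyExp q n p (fun z => f (Fin.cons a z)))^2)
        (noisyExp q n p (bfun q n f)) hK hp0 hp1 hu2id hu2le
      rw [hμdec, hRdec]
      refine le_trans hfin (add_le_add ?_ ?_)
      · exact mul_le_mul_of_nonneg_left hE0chain (by linarith)
      · refine mul_le_mul_of_nonneg_left ?_ (by positivity)
        rw [← hsum_id]
        exact hsumE

end Aux


/-- Talagrand-type isoperimetric inequality over `F_q`. -/
theorem stmt2 (q n : ℕ) [NeZero q] (hq : 2 ≤ q)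
    (f : (Fin n → ZMod q) → ℝ) (hf01 : ∀ z, f z = 0 ∨ f z = 1)
    (hmono : MonoDec q n f) (p : ℝ) (hp : p ∈ Set.Icc (0:ℝ) 1) :
    (1 - p) / 2 * (noisyExp q n p f * (1 - noisyExp q n p f)) ≤
      noisyExp q n p (fun z => Real.sqrt (hfun q n f z)) :=
  key q hq hp.1 hp.2 n f hf01 hmono
end

section
/- Let C ⊆ F_q^n be a linear code with minimum distance d_min, and let z ∈ F_q^n and c ∈ C satisfy d(z,0) ≤ d(z,c). Then |supp(c) \ supp(z)| ≥ d_min/q − d(z,c) + min_{c'∈C} d(z,c'), where d denotes Hamming distance and supp the support. -/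
open Finset

/-- If `d(z,0) ≤ d(z,c)` for a codeword `c` of a linear code `C` with minimum
distance at least `dmin`, then
`|supp(c) \ supp(z)| ≥ dmin/q − d(z,c) + min_{c'∈C} d(z,c')`. -/
theorem stmt4 {F : Type*} [Field F] [Fintype F] [DecidableEq F] (n : ℕ)
    (C : Submodule F (Fin n → F)) (dmin : ℕ)
    (hdmin : ∀ c ∈ C, c ≠ 0 → dmin ≤ hammingNorm c)
    (z : Fin n → F) (c : Fin n → F) (hc : c ∈ C) (hc0 : c ≠ 0)
    (hzc : hammingDist z 0 ≤ hammingDist z c) :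
    (dmin : ℝ) / (Fintype.card F) - (hammingDist z c : ℝ) +
        ((sInf {m : ℕ | ∃ c' ∈ C, hammingDist z c' = m} : ℕ) : ℝ) ≤
      ((Finset.univ.filter fun i : Fin n => c i ≠ 0 ∧ z i = 0).card : ℝ) := by
  classical
  set q := Fintype.card F with hq
  set N := sInf {m : ℕ | ∃ c' ∈ C, hammingDist z c' = m} with hN
  set A := (univ.filter fun i : Fin n => c i ≠ 0 ∧ z i = 0).card with hA
  set K := (univ.filter fun i : Fin n => c i = 0 ∧ z i ≠ 0).card with hK
  set B1 := (univ.filter fun i : Fin n => c i ≠ 0 ∧ z i = c i).card with hB1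
  set B2 := (univ.filter fun i : Fin n => c i ≠ 0 ∧ z i ≠ 0 ∧ z i ≠ c i).card with hB2
  set W := hammingNorm c with hW
  set D := hammingDist z c with hD
  -- pointwise counting identities
  have hDsum : D = A + K + B2 := by
    rw [hD, hA, hK, hB2]
    simp only [hammingDist, Finset.card_filter, ← Finset.sum_add_distrib]
    refine Finset.sum_congr rfl fun i _ => ?_
    by_cases h1 : c i = 0 <;> by_cases h2 : z i = 0 <;> by_cases h3 : z i = c i <;>
      simp_all
  have hWsum : W = A + B1 + B2 := by
    rw [hW, hA, hB1, hB2]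
    simp only [hammingNorm, Finset.card_filter, ← Finset.sum_add_distrib]
    refine Finset.sum_congr rfl fun i _ => ?_
    by_cases h1 : c i = 0 <;> by_cases h2 : z i = 0 <;> by_cases h3 : z i = c i <;>
      simp_all
  have hZsum : hammingNorm z = K + B1 + B2 := by
    rw [hK, hB1, hB2]
    simp only [hammingNorm, Finset.card_filter, ← Finset.sum_add_distrib]
    refine Finset.sum_congr rfl fun i _ => ?_
    by_cases h1 : c i = 0 <;> by_cases h2 : z i = 0 <;> by_cases h3 : z i = c i <;>
      simp_all
  have hB1A : B1 ≤ A := by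
    rw [hammingDist_zero_right, hZsum] at hzc
    rw [hDsum] at hzc
    omega
  have hdm : dmin ≤ W := hdmin c hc hc0
  -- per-coordinate sum over scalars
  have key : ∀ i : Fin n,
      (∑ l : F, if z i ≠ l * c i then 1 else 0) + (if c i ≠ 0 then 1 else 0)
        = q * (if c i ≠ 0 then 1 else 0) + q * (if c i = 0 ∧ z i ≠ 0 then 1 else 0) := by
    intro i
    by_cases h1 : c i = 0
    · by_cases h2 : z i = 0 <;> simp [h1, h2, hq, Finset.card_univ]
    · have hset : (univ.filter fun l : F => ¬ (z i ≠ l * c i)) = {z i * (c i)⁻¹} := by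
        ext l
        simp only [Finset.mem_filter, Finset.mem_univ, true_and, not_not,
          Finset.mem_singleton]
        constructor
        · intro h; field_simp [h1, h]; exact h.symm
        · intro h; subst h; field_simp [h1]
      have hcard := Finset.card_filter_add_card_filter_not
        (s := (univ : Finset F)) (p := fun l : F => z i ≠ l * c i)
      rw [hset] at hcard
      simp only [Finset.card_singleton, Finset.card_univ] at hcard
      have hsum : (∑ l : F, if z i ≠ l * c i then 1 else 0)
          = (univ.filter fun l : F => z i ≠ l * c i).card := by
        rw [Finset.card_filter]
      rw [hsum, if_pos h1, if_neg (fun h => h1 h.1), mul_one, mul_zero, add_zero]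
      exact hcard
  have ha : (∑ l : F, hammingDist z (l • c)) + W = q * W + q * K := by
    have hd : ∀ l : F, hammingDist z (l • c) = ∑ i, if z i ≠ l * c i then 1 else 0 := by
      intro l
      simp [hammingDist, Finset.card_filter, Pi.smul_apply, smul_eq_mul]
    simp only [hd]
    rw [Finset.sum_comm]
    have hn : W = ∑ i, if c i ≠ 0 then 1 else 0 := by
      simp [hW, hammingNorm, Finset.card_filter]
    rw [hn, hK, Finset.card_filter, ← Finset.sum_add_distrib, Finset.mul_sum,
      Finset.mul_sum, ← Finset.sum_add_distrib]
    exact Finset.sum_congr rfl fun i _ => key i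
  have hNle : ∀ l : F, N ≤ hammingDist z (l • c) := fun l =>
    Nat.sInf_le ⟨l • c, C.smul_mem l hc, rfl⟩
  have hqN : q * N ≤ ∑ l : F, hammingDist z (l • c) := by
    calc q * N = ∑ _l : F, N := by rw [Finset.sum_const, Finset.card_univ, smul_eq_mul]
    _ ≤ ∑ l : F, hammingDist z (l • c) := Finset.sum_le_sum fun l _ => hNle l
  have F1 : q * N + W ≤ q * W + q * K := le_trans (Nat.add_le_add_right hqN W) ha.le
  -- move to reals
  have hq0 : (0:ℝ) < (q:ℝ) := by exact_mod_cast Fintype.card_pos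
  have F1' : (q:ℝ) * N + W ≤ q * W + q * K := by exact_mod_cast F1
  have G2 : (q:ℝ) * D = q * A + q * K + q * B2 := by
    have : (D:ℝ) = A + K + B2 := by exact_mod_cast hDsum
    rw [this]; ring
  have G3 : (q:ℝ) * W = q * A + q * B1 + q * B2 := by
    have : (W:ℝ) = A + B1 + B2 := by exact_mod_cast hWsum
    rw [this]; ring
  have G4 : (q:ℝ) * B1 ≤ q * A := by
    have : (B1:ℝ) ≤ A := by exact_mod_cast hB1A
    nlinarith
  have F5' : (dmin:ℝ) ≤ W := by exact_mod_cast hdm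
  have h1 : (dmin:ℝ) + q * N ≤ q * A + q * D := by linarith
  have h2 : (dmin:ℝ)/q ≤ A + D - N := by
    rw [div_le_iff₀ hq0]
    have expand : ((A:ℝ) + D - N) * q = q*A + q*D - q*N := by ring
    linarith
  linarith
end

section
/- (Erasure channel) Let C ⊆ Z_q^n be a (p,L)-list-decodable code with minimum distance d_min. Fix c ∈ C and let z ∈ {0,1}^n be a random erasure pattern with each coordinate independently 1 with probability p' = p − (log n)/√n. Let S(z) = {c' ∈ C : c' agrees with c on all non-erased coordinates}. Then Pr[|S(z)| > 1] ≤ e^{−2 log² n} + L · p^{d_min}. -/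
open Finset

theorem hoeff_lemma (a s : ℝ) (ha0 : 0 ≤ a) (hs : 0 ≤ s) :
    1 - a + a * Real.exp s ≤ Real.exp (a * s + s ^ 2 / 8) := by
  set h : ℝ → ℝ := fun x => 1 - a + a * Real.exp x with hh_def
  have hpos : ∀ x : ℝ, 0 ≤ x → 0 < h x := by
    intro x hx
    have h1 := Real.one_le_exp hx
    have h2 : 0 ≤ a * (Real.exp x - 1) := mul_nonneg ha0 (by linarith)
    simp only [hh_def]
    nlinarith
  have hd_h : ∀ x : ℝ, HasDerivAt h (a * Real.exp x) x := by
    intro x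
    exact ((Real.hasDerivAt_exp x).const_mul a).const_add (1 - a)
  set G : ℝ → ℝ := fun x => a + x / 4 - a * Real.exp x / h x with hG_def
  set g : ℝ → ℝ := fun y => a * y + y ^ 2 / 8 - Real.log (h y) with hg_def
  have hd_g : ∀ x : ℝ, 0 ≤ x → HasDerivAt g (G x) x := by
    intro x hx
    have p1 : HasDerivAt (fun y : ℝ => a * y + y ^ 2 / 8) (a + x / 4) x := by
      have h1 : HasDerivAt (fun y : ℝ => a * y) a x := by
        simpa using (hasDerivAt_id x).const_mul a
      have h2 : HasDerivAt (fun y : ℝ => y ^ 2 / 8) (x / 4) x := by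
        have := (hasDerivAt_pow 2 x).div_const 8
        refine this.congr_deriv ?_
        norm_num
        ring
      exact h1.add h2
    have p3 : HasDerivAt (fun y => Real.log (h y)) (a * Real.exp x / h x) x :=
      (hd_h x).log (hpos x hx).ne'
    exact p1.sub p3
  have hd_G : ∀ x : ℝ, 0 ≤ x →
      HasDerivAt G (1/4 - (a * Real.exp x * h x - a * Real.exp x * (a * Real.exp x)) / (h x) ^ 2) x := by
    intro x hx
    have p1 : HasDerivAt (fun y : ℝ => a + y / 4) (1/4) x := by
      simpa using ((hasDerivAt_id x).div_const 4).const_add a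
    have p2 : HasDerivAt (fun y => a * Real.exp y / h y)
        ((a * Real.exp x * h x - a * Real.exp x * (a * Real.exp x)) / (h x) ^ 2) x :=
      ((Real.hasDerivAt_exp x).const_mul a).div (hd_h x) (hpos x hx).ne'
    exact p1.sub p2
  have hGderiv_nonneg : ∀ x : ℝ, 0 ≤ x →
      0 ≤ 1/4 - (a * Real.exp x * h x - a * Real.exp x * (a * Real.exp x)) / (h x) ^ 2 := by
    intro x hx
    have hH := hpos x hx
    have hH2 : 0 < (h x) ^ 2 := by positivity
    rw [sub_nonneg, div_le_iff₀ hH2]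
    have hHx : h x = 1 - a + a * Real.exp x := rfl
    rw [hHx]
    nlinarith [sq_nonneg (1 - a - a * Real.exp x)]
  have hGmono : MonotoneOn G (Set.Ici 0) := by
    apply monotoneOn_of_deriv_nonneg (convex_Ici 0)
    · intro x hx
      exact ((hd_G x hx).continuousAt).continuousWithinAt
    · intro x hx
      rw [interior_Ici] at hx
      exact ((hd_G x (le_of_lt hx)).differentiableAt).differentiableWithinAt
    · intro x hx
      rw [interior_Ici] at hx
      rw [(hd_G x (le_of_lt hx)).deriv]
      exact hGderiv_nonneg x (le_of_lt hx)
  have hG0 : G 0 = 0 := by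
    simp only [hG_def, hh_def, Real.exp_zero, mul_one]
    have : (1:ℝ) - a + a = 1 := by ring
    rw [this]
    norm_num
  have hGnonneg : ∀ x : ℝ, 0 ≤ x → 0 ≤ G x := by
    intro x hx
    rw [← hG0]
    exact hGmono (Set.self_mem_Ici) hx hx
  have hgmono : MonotoneOn g (Set.Ici 0) := by
    apply monotoneOn_of_deriv_nonneg (convex_Ici 0)
    · intro x hx
      exact ((hd_g x hx).continuousAt).continuousWithinAt
    · intro x hx
      rw [interior_Ici] at hx
      exact ((hd_g x (le_of_lt hx)).differentiableAt).differentiableWithinAt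
    · intro x hx
      rw [interior_Ici] at hx
      rw [(hd_g x (le_of_lt hx)).deriv]
      exact hGnonneg x (le_of_lt hx)
  have hg0 : g 0 = 0 := by
    simp only [hg_def, hh_def, Real.exp_zero, mul_one, mul_zero]
    have : (1:ℝ) - a + a = 1 := by ring
    rw [this]
    simp
  have hgs : 0 ≤ g s := by
    rw [← hg0]
    exact hgmono (Set.self_mem_Ici) hs hs
  have hlog : Real.log (h s) ≤ a * s + s ^ 2 / 8 := by
    simp only [hg_def] at hgs
    linarith
  exact (Real.log_le_iff_le_exp (hpos s hs)).mp hlog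

lemma sum_prod_bool {n : ℕ} (f : Fin n → Bool → ℝ) :
    (∑ z : Fin n → Bool, ∏ i, f i (z i)) = ∏ i, (f i false + f i true) := by
  classical
  rw [← Fintype.prod_sum f]
  exact Finset.prod_congr rfl fun i _ => by rw [Fintype.sum_bool]; ring

lemma prod_ite_card {n : ℕ} (P : Fin n → Prop) [DecidablePred P] (x y : ℝ) :
    (∏ i, if P i then x else y) =
      x ^ (univ.filter P).card * y ^ (univ.filter fun i => ¬ P i).card := by
  rw [← Finset.prod_filter_mul_prod_filter_not univ P]
  congr 1
  · rw [Finset.prod_congr rfl (fun i hi => if_pos (Finset.mem_filter.mp hi).2),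
      Finset.prod_const]
  · rw [Finset.prod_congr rfl (fun i hi => if_neg (Finset.mem_filter.mp hi).2),
      Finset.prod_const]

/-- Erasure channel: for a `(p,L)`-list-decodable code `C ⊆ Z_q^n` with minimum
distance `d_min` and a codeword `c`, under i.i.d. `Bernoulli(p − log n/√n)`
erasures the probability that some other codeword agrees with `c` on all
non-erased coordinates is at most `e^{−2 log² n} + L·p^{d_min}`. -/
theorem stmt13 (q n L dmin : ℕ) (p : ℝ) (C : Finset (Fin n → Fin q))
    (c : Fin n → Fin q) (hc : c ∈ C)
    (hdist : ∀ c₁ ∈ C, ∀ c₂ ∈ C, c₁ ≠ c₂ → dmin ≤ hammingDist c₁ c₂)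
    (hLD : ∀ w : Fin n → Fin q,
      (C.filter fun c' => (hammingDist w c' : ℝ) ≤ p * n).card ≤ L)
    (hp0 : 0 ≤ p - Real.log n / Real.sqrt n) (hp1 : p ≤ 1) :
    (∑ z : Fin n → Bool,
        (∏ i, if z i then p - Real.log n / Real.sqrt n
              else 1 - (p - Real.log n / Real.sqrt n)) *
          (if 1 < (C.filter fun c' => ∀ i, z i = false → c' i = c i).card then (1:ℝ) else 0)) ≤
      Real.exp (-2 * Real.log n ^ 2) + (L : ℝ) * p ^ dmin := by
  classical
  set a : ℝ := p - Real.log n / Real.sqrt n with ha_def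
  have hlogn : 0 ≤ Real.log n := Real.log_natCast_nonneg n
  have hsqn : 0 ≤ Real.sqrt n := Real.sqrt_nonneg _
  have ht0 : 0 ≤ Real.log n / Real.sqrt n := div_nonneg hlogn hsqn
  have hap : a ≤ p := by rw [ha_def]; linarith
  have ha0 : 0 ≤ a := hp0
  have ha1 : a ≤ 1 := hap.trans hp1
  have hpnn : 0 ≤ p := ha0.trans hap
  set s : ℝ := 4 * (Real.log n / Real.sqrt n) with hs_def
  have hs0 : 0 ≤ s := by rw [hs_def]; linarith
  set W : (Fin n → Bool) → ℝ := fun z => ∏ i, if z i then a else 1 - a with hW_def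
  have hW0 : ∀ z, 0 ≤ W z := by
    intro z
    apply Finset.prod_nonneg
    intro i _
    split <;> linarith
  set wt : (Fin n → Bool) → ℕ := fun z => (univ.filter fun i => z i = true).card with hwt_def
  set A : (Fin n → Bool) → ℝ := fun z => if p * n < (wt z : ℝ) then 1 else 0 with hA_def
  set B : (Fin n → Bool) → ℝ := fun z =>
    if ((wt z : ℝ) ≤ p * n ∧
        1 < (C.filter fun c' => ∀ i, z i = false → c' i = c i).card) then 1 else 0 with hB_def
  -- Step 0: split
  have main_split : (∑ z : Fin n → Bool,
      (∏ i, if z i then a else 1 - a) *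
        (if 1 < (C.filter fun c' => ∀ i, z i = false → c' i = c i).card then (1:ℝ) else 0)) ≤
      (∑ z : Fin n → Bool, W z * A z) + (∑ z : Fin n → Bool, W z * B z) := by
    rw [← Finset.sum_add_distrib]
    apply Finset.sum_le_sum
    intro z _
    rw [← mul_add]
    apply mul_le_mul_of_nonneg_left _ (hW0 z)
    have hA0 : (0:ℝ) ≤ A z := by rw [hA_def]; dsimp only; split <;> norm_num
    have hB0 : (0:ℝ) ≤ B z := by rw [hB_def]; dsimp only; split <;> norm_num
    split_ifs with hcard
    · by_cases hwt : (wt z : ℝ) ≤ p * n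
      · have hB1 : B z = 1 := by
          rw [hB_def]; exact if_pos ⟨hwt, hcard⟩
        rw [hB1]; linarith
      · have hA1 : A z = 1 := by
          rw [hA_def]; exact if_pos (lt_of_not_ge hwt)
        rw [hA1]; linarith
    · linarith
  refine le_trans main_split (add_le_add ?_ ?_)
  · -- Part 1 : Hoeffding tail
    have pointwise : ∀ z : Fin n → Bool,
        W z * A z ≤ Real.exp (-(s * (p * n))) * ∏ i, (if z i then a * Real.exp s else 1 - a) := by
      intro z
      have hprod_nonneg : (0:ℝ) ≤ ∏ i, (if z i then a * Real.exp s else 1 - a) := by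
        apply Finset.prod_nonneg
        intro i _
        split
        · exact mul_nonneg ha0 (Real.exp_nonneg s)
        · linarith
      rw [hA_def]
      dsimp only
      split_ifs with hA
      · rw [mul_one, hW_def]
        dsimp only
        rw [prod_ite_card (fun i => z i = true) a (1-a),
          prod_ite_card (fun i => z i = true) (a * Real.exp s) (1-a), mul_pow]
        set k := (univ.filter fun i => z i = true).card with hk_def
        set m := (univ.filter fun i => ¬ z i = true).card
        have hE : Real.exp s ^ k = Real.exp (s * k) := by
          rw [← Real.exp_nat_mul]; ring_nf
        have h1 : (1:ℝ) ≤ Real.exp (-(s * (p * n))) * Real.exp (s * k) := by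
          rw [← Real.exp_add]
          apply Real.one_le_exp
          have hk : p * n ≤ (k : ℝ) := by
            have : (wt z : ℝ) = (k : ℝ) := by rw [hwt_def]
            exact le_of_lt (by rw [← this]; exact hA)
          nlinarith [mul_nonneg hs0 (sub_nonneg.mpr hk)]
        calc a ^ k * (1-a) ^ m = 1 * (a ^ k * (1-a) ^ m) := (one_mul _).symm
          _ ≤ (Real.exp (-(s * (p * n))) * Real.exp (s * k)) * (a ^ k * (1-a) ^ m) := by
              apply mul_le_mul_of_nonneg_right h1
              apply mul_nonneg (pow_nonneg ha0 _) (pow_nonneg (by linarith) _)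
          _ = Real.exp (-(s * (p * n))) * (a ^ k * Real.exp s ^ k * (1-a) ^ m) := by
              rw [hE]; ring
      · rw [mul_zero]
        exact mul_nonneg (Real.exp_nonneg _) hprod_nonneg
    calc (∑ z : Fin n → Bool, W z * A z)
        ≤ ∑ z : Fin n → Bool,
            Real.exp (-(s * (p * n))) * ∏ i, (if z i then a * Real.exp s else 1 - a) :=
          Finset.sum_le_sum fun z _ => pointwise z
      _ = Real.exp (-(s * (p * n))) *
            ∑ z : Fin n → Bool, ∏ i, (if z i then a * Real.exp s else 1 - a) := by
          rw [Finset.mul_sum]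
      _ = Real.exp (-(s * (p * n))) * (1 - a + a * Real.exp s) ^ n := by
          rw [sum_prod_bool (fun i b => if b then a * Real.exp s else 1 - a)]
          simp only [Bool.false_eq_true, if_false, if_true]
          rw [Finset.prod_const, Finset.card_univ, Fintype.card_fin]
      _ ≤ Real.exp (-(s * (p * n))) * (Real.exp (a * s + s ^ 2 / 8)) ^ n := by
          apply mul_le_mul_of_nonneg_left _ (Real.exp_nonneg _)
          apply pow_le_pow_left₀ (by nlinarith [Real.exp_nonneg s, mul_nonneg ha0 (Real.exp_nonneg s)])
          exact hoeff_lemma a s ha0 hs0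
      _ = Real.exp (-2 * Real.log n ^ 2) := by
          rw [← Real.exp_nat_mul, ← Real.exp_add]
          congr 1
          rcases Nat.eq_zero_or_pos n with h0 | hn
          · subst h0
            simp [hs_def]
          · have hu0 : Real.sqrt n ≠ 0 := by
              have : (0:ℝ) < n := by exact_mod_cast hn
              positivity
            set Ln := Real.log n
            set u := Real.sqrt n with hu_def
            have h2 : u ^ 2 = (n : ℝ) := Real.sq_sqrt (Nat.cast_nonneg n)
            have hpa : p = a + Ln / u := by rw [ha_def]; ring
            rw [hpa, hs_def, ← h2]
            field_simp
            ring
  · -- Part 2 : list decoding bound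
    set C' : Finset (Fin n → Fin q) :=
      (C.filter fun c' => (hammingDist c c' : ℝ) ≤ p * n).erase c with hC'_def
    have hC'card : (C'.card : ℝ) ≤ (L : ℝ) := by
      have h1 : C'.card ≤ L := le_trans (Finset.card_erase_le) (hLD c)
      exact_mod_cast h1
    set J : (Fin n → Fin q) → (Fin n → Bool) → ℝ := fun c' z =>
      if (∀ i, c' i ≠ c i → z i = true) then 1 else 0 with hJ_def
    have pointwise : ∀ z : Fin n → Bool, B z ≤ ∑ c' ∈ C', J c' z := by
      intro z
      have hJ0 : ∀ c' ∈ C', (0:ℝ) ≤ J c' z := by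
        intro c' _
        rw [hJ_def]; dsimp only; split <;> norm_num
      rw [hB_def]
      dsimp only
      split_ifs with hB
      · obtain ⟨hwtz, hcard⟩ := hB
        obtain ⟨c', hc'S, hne⟩ := Finset.exists_mem_ne hcard c
        have hc'C : c' ∈ C := (Finset.mem_filter.mp hc'S).1
        have hagree : ∀ i, z i = false → c' i = c i := (Finset.mem_filter.mp hc'S).2
        have hDz : ∀ i, c' i ≠ c i → z i = true := by
          intro i hi
          cases hzb : z i
          · exact absurd (hagree i hzb) hi
          · rfl
        have hsub : ({i | c i ≠ c' i} : Finset (Fin n)) ⊆ (univ.filter fun i => z i = true) := by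
          intro i hi
          simp only [Finset.mem_filter, Finset.mem_univ, true_and] at hi ⊢
          exact hDz i fun h => hi h.symm
        have hdle : (hammingDist c c' : ℝ) ≤ p * n := by
          have h1 : hammingDist c c' ≤ wt z := by
            rw [hwt_def]
            exact Finset.card_le_card hsub
          calc (hammingDist c c' : ℝ) ≤ (wt z : ℝ) := by exact_mod_cast h1
            _ ≤ p * n := hwtz
        have hc'mem : c' ∈ C' := by
          rw [hC'_def]
          exact Finset.mem_erase.mpr ⟨hne, Finset.mem_filter.mpr ⟨hc'C, hdle⟩⟩
        have hJ1 : J c' z = 1 := by rw [hJ_def]; exact if_pos hDz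
        calc (1:ℝ) = J c' z := hJ1.symm
          _ ≤ ∑ c'' ∈ C', J c'' z := Finset.single_le_sum hJ0 hc'mem
      · exact Finset.sum_nonneg hJ0
    have inner : ∀ c' ∈ C', (∑ z : Fin n → Bool, W z * J c' z) ≤ p ^ dmin := by
      intro c' hc'
      have hc'C : c' ∈ C := Finset.mem_of_mem_filter c' (Finset.mem_of_mem_erase hc')
      have hne : c' ≠ c := (Finset.mem_erase.mp hc').1
      have hdmin : dmin ≤ ({i | c' i ≠ c i} : Finset (Fin n)).card := by
        have := hdist c' hc'C c hc hne
        rwa [hammingDist] at this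
      have heq : (∑ z : Fin n → Bool, W z * J c' z) =
          a ^ (univ.filter fun i => c' i ≠ c i).card := by
        have hrw : ∀ z : Fin n → Bool, W z * J c' z =
            ∏ i, ((if z i then a else 1 - a) *
              (if (c' i ≠ c i → z i = true) then 1 else 0)) := by
          intro z
          rw [hW_def, hJ_def]
          dsimp only
          rw [Finset.prod_mul_distrib]
          congr 1
          rw [Finset.prod_boole]
          simp
        rw [Finset.sum_congr rfl (fun z _ => hrw z)]
        rw [sum_prod_bool (fun i b => (if b then a else 1 - a) *
          (if (c' i ≠ c i → b = true) then 1 else 0))]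
        have hfac : ∀ i : Fin n,
            ((if (false:Bool) then a else 1 - a) * (if (c' i ≠ c i → (false:Bool) = true) then (1:ℝ) else 0)) +
            ((if (true:Bool) then a else 1 - a) * (if (c' i ≠ c i → (true:Bool) = true) then (1:ℝ) else 0)) =
            (if c' i ≠ c i then a else 1) := by
          intro i
          by_cases hD : c' i ≠ c i
          · simp [hD]
          · simp only [hD, if_false, if_true]
            push_neg at hD
            simp [hD]
        rw [Finset.prod_congr rfl (fun i _ => hfac i)]
        rw [prod_ite_card (fun i => c' i ≠ c i) a 1, one_pow, mul_one]
      rw [heq]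
      calc a ^ (univ.filter fun i => c' i ≠ c i).card ≤ a ^ dmin := by
            apply pow_le_pow_of_le_one ha0 ha1
            convert hdmin using 2
        _ ≤ p ^ dmin := pow_le_pow_left₀ ha0 hap dmin
    calc (∑ z : Fin n → Bool, W z * B z)
        ≤ ∑ z : Fin n → Bool, W z * ∑ c' ∈ C', J c' z :=
          Finset.sum_le_sum fun z _ => mul_le_mul_of_nonneg_left (pointwise z) (hW0 z)
      _ = ∑ c' ∈ C', ∑ z : Fin n → Bool, W z * J c' z := by
          simp_rw [Finset.mul_sum]
          rw [Finset.sum_comm]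
      _ ≤ ∑ c' ∈ C', p ^ dmin := Finset.sum_le_sum inner
      _ = (C'.card : ℝ) * p ^ dmin := by rw [Finset.sum_const, nsmul_eq_mul]
      _ ≤ (L : ℝ) * p ^ dmin := mul_le_mul_of_nonneg_right hC'card (pow_nonneg hpnn dmin)
end

section
/- For nonnegative random variables H and F with F taking values in {0,1}, the following 'square-root gain' bound holds: E[√(H+F)] ≥ E[√H] + E[F]² / (E[F] + 2E[√H]), provided E[F] + 2E[√H] > 0. -/
open Finset

/-- Square-root gain bound: for nonnegative `H` and `{0,1}`-valued `F` on a
finite probability space, `E[√(H+F)] ≥ E[√H] + E[F]²/(E[F] + 2E[√H])`. -/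
theorem stmt17 {α : Type*} [Fintype α] (w H F : α → ℝ)
    (hw : ∀ a, 0 ≤ w a) (hw1 : ∑ a, w a = 1)
    (hH : ∀ a, 0 ≤ H a) (hF : ∀ a, F a = 0 ∨ F a = 1)
    (hpos : 0 < (∑ a, w a * F a) + 2 * ∑ a, w a * Real.sqrt (H a)) :
    (∑ a, w a * Real.sqrt (H a)) +
        (∑ a, w a * F a) ^ 2 / ((∑ a, w a * F a) + 2 * ∑ a, w a * Real.sqrt (H a)) ≤
      ∑ a, w a * Real.sqrt (H a + F a) := by
  set A := ∑ a, w a * Real.sqrt (H a + F a) with hA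
  set B := ∑ a, w a * Real.sqrt (H a) with hB
  set Ef := ∑ a, w a * F a with hEf
  have hFnn : ∀ a, 0 ≤ F a := fun a => by rcases hF a with h | h <;> simp [h]
  have hab : ∀ a, Real.sqrt (H a) ≤ Real.sqrt (H a + F a) := fun a =>
    Real.sqrt_le_sqrt (by linarith [hFnn a])
  have hDB : B ≤ A :=
    Finset.sum_le_sum fun a _ => mul_le_mul_of_nonneg_left (hab a) (hw a)
  -- √(H+F) ≤ √H + F pointwise
  have hup : ∀ a, Real.sqrt (H a + F a) ≤ Real.sqrt (H a) + F a := by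
    intro a
    have h1 : H a + F a ≤ (Real.sqrt (H a) + F a) ^ 2 := by
      have hsq : Real.sqrt (H a) ^ 2 = H a := Real.sq_sqrt (hH a)
      have hF2 : F a ^ 2 = F a := by rcases hF a with h | h <;> simp [h]
      nlinarith [Real.sqrt_nonneg (H a), hFnn a]
    calc Real.sqrt (H a + F a) ≤ Real.sqrt ((Real.sqrt (H a) + F a) ^ 2) :=
          Real.sqrt_le_sqrt h1
      _ = Real.sqrt (H a) + F a :=
          Real.sqrt_sq (add_nonneg (Real.sqrt_nonneg _) (hFnn a))
  have hAB : A ≤ Ef + B := by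
    rw [hA, hEf, hB, ← Finset.sum_add_distrib]
    refine Finset.sum_le_sum fun a _ => ?_
    rw [← mul_add]
    exact mul_le_mul_of_nonneg_left ((hup a).trans (by ring_nf; exact le_refl _)) (hw a)
  -- Cauchy-Schwarz: Ef² ≤ (A - B) * (A + B)
  have key : Ef ^ 2 ≤ (A - B) * (A + B) := by
    have := Finset.sum_sq_le_sum_mul_sum_of_sq_eq_mul (Finset.univ : Finset α)
      (r := fun a => w a * F a)
      (f := fun a => w a * (Real.sqrt (H a + F a) - Real.sqrt (H a)))
      (g := fun a => w a * (Real.sqrt (H a + F a) + Real.sqrt (H a)))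
      (fun a _ => mul_nonneg (hw a) (by linarith [hab a]))
      (fun a _ => mul_nonneg (hw a) (by positivity))
      (fun a _ => by
        have hF2 : F a ^ 2 = F a := by rcases hF a with h | h <;> simp [h]
        have h1 : Real.sqrt (H a + F a) ^ 2 = H a + F a :=
          Real.sq_sqrt (add_nonneg (hH a) (hFnn a))
        have h2 : Real.sqrt (H a) ^ 2 = H a := Real.sq_sqrt (hH a)
        have hprod : (Real.sqrt (H a + F a) - Real.sqrt (H a)) *
            (Real.sqrt (H a + F a) + Real.sqrt (H a)) = F a := by nlinarith
        show (w a * F a) ^ 2 = _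
        rw [mul_pow, hF2]; linear_combination (-(w a ^ 2)) * hprod)
    calc Ef ^ 2 = (∑ a, w a * F a) ^ 2 := by rw [hEf]
      _ ≤ (∑ a, w a * (Real.sqrt (H a + F a) - Real.sqrt (H a))) *
            ∑ a, w a * (Real.sqrt (H a + F a) + Real.sqrt (H a)) := this
      _ = (A - B) * (A + B) := by
          simp only [mul_sub, mul_add, Finset.sum_sub_distrib, Finset.sum_add_distrib,
            hA, hB]
  have key2 : Ef ^ 2 ≤ (A - B) * (Ef + 2 * B) := by
    calc Ef ^ 2 ≤ (A - B) * (A + B) := key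
      _ ≤ (A - B) * (Ef + 2 * B) := by
          apply mul_le_mul_of_nonneg_left (by linarith) (by linarith)
  have : Ef ^ 2 / (Ef + 2 * B) ≤ A - B := by
    rw [div_le_iff₀ hpos]
    linarith
  linarith
end
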